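/- The functional J is coercive with rate ε: for every sequence (vₙ) in Y with ‖vₙ‖ → ∞, one has liminfₙ J(vₙ)/‖vₙ‖ ≥ ε. -/

import Mathlib

open RealInnerProductSpace ContinuousLinearMap

/-- The functional J(v) = (1/2)‖L*v‖² + ε‖v‖ − ⟨f, v⟩ is coercive with rate ε:
for any sequence with ‖vₙ‖ → ∞, liminf J(vₙ)/‖vₙ‖ ≥ ε. -/
theorem J_coercive
    {X Y : Type*} [NormedAddCommGroup X] [InnerProductSpace ℝ X] [CompleteSpace X]
    [NormedAddCommGroup Y] [InnerProductSpace ℝ Y] [CompleteSpace Y]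
    (L : X →L[ℝ] Y) (hinj : Function.Injective (adjoint L))
    (f : Y) (ε : ℝ) (hε : 0 < ε)
    (J : Y → ℝ)
    (hJ : J = fun v => (1/2) * ‖adjoint L v‖^2 + ε * ‖v‖ - ⟪f, v⟫)
    (v : ℕ → Y) (hv : Filter.Tendsto (fun n => ‖v n‖) Filter.atTop Filter.atTop) :
    (ε : EReal) ≤ Filter.liminf (fun n => ((J (v n) / ‖v n‖ : ℝ) : EReal)) Filter.atTop := by
  -- L has dense range
  have hdr : DenseRange L := by
    have horth : (LinearMap.range (L : X →ₗ[ℝ] Y))ᗮ = ⊥ := by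
      rw [Submodule.eq_bot_iff]
      intro u hu
      apply hinj
      rw [map_zero]
      have h0 : ⟪L (adjoint L u), u⟫ = 0 := hu _ ⟨adjoint L u, rfl⟩
      have h1 : ⟪adjoint L u, adjoint L u⟫ = (0 : ℝ) := by
        rw [adjoint_inner_left, real_inner_comm, h0]
      exact inner_self_eq_zero.mp h1
    have hclos : (LinearMap.range (L : X →ₗ[ℝ] Y)).topologicalClosure = ⊤ := by
      rw [← Submodule.orthogonal_orthogonal_eq_closure, horth,
        Submodule.bot_orthogonal_eq_top]
    have : Dense ((LinearMap.range (L : X →ₗ[ℝ] Y) : Submodule ℝ Y) : Set Y) :=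
      Submodule.dense_iff_topologicalClosure_eq_top.mpr hclos
    simpa [DenseRange, LinearMap.coe_range] using this
  by_contra hlt
  push_neg at hlt
  obtain ⟨c, hc1, hc2⟩ := EReal.exists_between_coe_real hlt
  rw [EReal.coe_lt_coe_iff] at hc2
  have hδ : 0 < (ε - c) / 2 := by linarith
  set δ : ℝ := (ε - c) / 2 with hδdef
  obtain ⟨x, hx⟩ := hdr.exists_dist_lt f hδ
  rw [dist_eq_norm] at hx
  -- eventually J(v n)/‖v n‖ ≥ c
  have hev : ∀ᶠ n in Filter.atTop,
      (c : EReal) ≤ ((J (v n) / ‖v n‖ : ℝ) : EReal) := by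
    have hbig : ∀ᶠ n in Filter.atTop, max 1 (‖x‖^2 / (2 * δ)) ≤ ‖v n‖ :=
      hv.eventually_ge_atTop _
    filter_upwards [hbig] with n hn
    rw [EReal.coe_le_coe_iff]
    set w := v n with hw
    have hw1 : (1 : ℝ) ≤ ‖w‖ := le_trans (le_max_left _ _) hn
    have hw0 : 0 < ‖w‖ := lt_of_lt_of_le one_pos hw1
    have hw2 : ‖x‖^2 / (2 * δ) ≤ ‖w‖ := le_trans (le_max_right _ _) hn
    rw [le_div_iff₀ hw0]
    -- key inner product estimate
    have hinner : ⟪f, w⟫ ≤ (1/2) * ‖adjoint L w‖^2 + (1/2) * ‖x‖^2 + δ * ‖w‖ := by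
      have hAx : ⟪x, adjoint L w⟫ = ⟪L x, w⟫ := by
        rw [real_inner_comm, adjoint_inner_left, real_inner_comm]
      have hsplit : ⟪f, w⟫ = ⟪x, adjoint L w⟫ + ⟪f - L x, w⟫ := by
        rw [hAx, inner_sub_left]; ring
      have h1 : ⟪x, adjoint L w⟫ ≤ ‖x‖ * ‖adjoint L w‖ := real_inner_le_norm _ _
      have h2 : ⟪f - L x, w⟫ ≤ ‖f - L x‖ * ‖w‖ := real_inner_le_norm _ _
      have h3 : ‖f - L x‖ * ‖w‖ ≤ δ * ‖w‖ :=
        mul_le_mul_of_nonneg_right hx.le hw0.le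
      nlinarith [sq_nonneg (‖x‖ - ‖adjoint L w‖)]
    have hwd : ‖x‖^2 / 2 ≤ δ * ‖w‖ := by
      rw [div_le_iff₀ (by norm_num : (0:ℝ) < 2)] at *
      have := (div_le_iff₀ (by positivity : (0:ℝ) < 2 * δ)).mp hw2
      nlinarith
    rw [hJ]
    simp only
    nlinarith
  have : (c : EReal) ≤ Filter.liminf (fun n => ((J (v n) / ‖v n‖ : ℝ) : EReal))
      Filter.atTop := Filter.le_liminf_of_le (by isBoundedDefault) hev
  exact absurd (lt_of_le_of_lt this hc1) (lt_irrefl _)
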